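/- If (b_n) is a positive sequence belonging to GS(−b*) with b*<1, then for any fixed integer k_0≥1, lim_{n→∞} n b_n / (Σ_{k=k_0}^n b_k) = 1 − b*. -/

import Mathlib

open MeasureTheory Filter Set ProbabilityTheory Asymptotics
open scoped ENNReal NNReal

noncomputable section

/-- A positive sequence belongs to `GS(c)` if `n (1 - v (n-1) / v n) → c`. -/
def GSseq (c : ℝ) (v : ℕ → ℝ) : Prop :=
  Tendsto (fun n : ℕ => (n : ℝ) * (1 - v (n - 1) / v n)) atTop (nhds c)

/-- Marginal density of `X`. -/
def fdens (g : ℝ → ℝ → ℝ) (t : ℝ) : ℝ := ∫ y : ℝ, g t y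

/-- Regression function `r(t) = E[Y | X = t]`. -/
def reg (g : ℝ → ℝ → ℝ) (t : ℝ) : ℝ := (∫ y : ℝ, y * g t y) / fdens g t

/-- Conditional variance `Var[Y | X = t]`. -/
def condVar (g : ℝ → ℝ → ℝ) (t : ℝ) : ℝ :=
  (∫ y : ℝ, (y - reg g t) ^ 2 * g t y) / fdens g t

/-- Integrand appearing in the definition of `ψ_{a,q,x}`. -/
def psiIntegrand (K : ℝ → ℝ) (g : ℝ → ℝ → ℝ) (a q x u : ℝ) (p : ℝ × ℝ × ℝ) : ℝ :=
  p.1 ^ (-a) *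
    (Real.exp (u * p.1 ^ (a - q) * K p.2.1 * (p.2.2 - reg g x) / fdens g x) - 1) * g x p.2.2

/-- The function `ψ_{a,q,x}`. -/
def psiFn (K : ℝ → ℝ) (g : ℝ → ℝ → ℝ) (a q x : ℝ) (u : ℝ) : ℝ :=
  (1 - q) * ∫ p in (Icc (0:ℝ) 1) ×ˢ (univ : Set (ℝ × ℝ)), psiIntegrand K g a q x u p

/-- The Fenchel–Legendre transform `I_{a,q,x}` of `ψ_{a,q,x}`, as a `[0,∞]`-valued function. -/
def rateI (K : ℝ → ℝ) (g : ℝ → ℝ → ℝ) (a q x : ℝ) (t : ℝ) : ℝ≥0∞ :=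
  ⨆ u : ℝ, ENNReal.ofReal (u * t - psiFn K g a q x u)

/-- A good rate function: nonnegative (enforced by the codomain) with compact level sets. -/
def IsGoodRate (I : ℝ → ℝ≥0∞) : Prop := ∀ c : NNReal, IsCompact {t : ℝ | I t ≤ (c : ℝ≥0∞)}

/-- `(Z_n)` satisfies a large deviations principle with speed `ν_n` and good rate function `I`. -/
def HasLDP {Ω : Type*} [MeasurableSpace Ω] (μ : Measure Ω) (Z : ℕ → Ω → ℝ)
    (ν : ℕ → ℝ) (I : ℝ → ℝ≥0∞) : Prop :=
  Tendsto ν atTop atTop ∧ IsGoodRate I ∧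
    ∀ B : Set ℝ, MeasurableSet B →
      (-(⨅ t ∈ interior B, (I t : EReal)) ≤
          liminf (fun n : ℕ =>
            (((ν n)⁻¹ * Real.log (μ {ω | Z n ω ∈ B}).toReal : ℝ) : EReal)) atTop ∧
        limsup (fun n : ℕ =>
            (((ν n)⁻¹ * Real.log (μ {ω | Z n ω ∈ B}).toReal : ℝ) : EReal)) atTop ≤
          -(⨅ t ∈ closure B, (I t : EReal)))

/-- Révész's stochastic approximation estimator of the regression function at `x`. -/
def revesz {Ω : Type*} (K : ℝ → ℝ) (γ h : ℕ → ℝ) (X Y : ℕ → Ω → ℝ) (x r0 : ℝ) :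
    ℕ → Ω → ℝ
  | 0 => fun _ => r0
  | n + 1 => fun ω =>
      (1 - γ (n+1) * (h (n+1))⁻¹ * K ((x - X (n+1) ω) / h (n+1))) *
          revesz K γ h X Y x r0 n ω
        + γ (n+1) * (h (n+1))⁻¹ * Y (n+1) ω * K ((x - X (n+1) ω) / h (n+1))

/-- Weighted average `(Σ_{k=1}^n q_k)⁻¹ Σ_{k=1}^n q_k u_k`. -/
def avgSeq {Ω : Type*} (q : ℕ → ℝ) (u : ℕ → Ω → ℝ) (n : ℕ) (ω : Ω) : ℝ :=
  (∑ k ∈ Finset.Icc 1 n, q k)⁻¹ * ∑ k ∈ Finset.Icc 1 n, q k * u k ω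

/-- The auxiliary stochastic approximation algorithm `ρ_n(x)`. -/
def rhoAux {Ω : Type*} (K : ℝ → ℝ) (γ h : ℕ → ℝ) (X Y : ℕ → Ω → ℝ) (x r0 fx rx : ℝ)
    (n0 : ℕ) : ℕ → Ω → ℝ
  | 0 => fun _ => rx
  | n + 1 => fun ω =>
      if n + 1 ≤ n0 - 2 then rx
      else if n + 1 = n0 - 1 then revesz K γ h X Y x r0 (n0 - 1) ω
      else
        (1 - γ (n+1) * fx) * rhoAux K γ h X Y x r0 fx rx n0 n ω
          + γ (n+1) * (fx - (h (n+1))⁻¹ * K ((x - X (n+1) ω) / h (n+1))) * rx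
          + γ (n+1) * (h (n+1))⁻¹ * Y (n+1) ω * K ((x - X (n+1) ω) / h (n+1))

/-- `η_k(x) = (Y_k − r(x)) K((x − X_k)/h_k)`. -/
def etaSeq {Ω : Type*} (K : ℝ → ℝ) (h : ℕ → ℝ) (X Y : ℕ → Ω → ℝ) (x rx : ℝ)
    (k : ℕ) (ω : Ω) : ℝ :=
  (Y k ω - rx) * K ((x - X k ω) / h k)

/-- `Ψ_n(x) = f(x)⁻¹ (Σ_{k=1}^n q_k)⁻¹ Σ_{k=n_0−1}^n q_k h_k⁻¹ (η_k(x) − E[η_k(x)])`. -/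
def PsiSeq {Ω : Type*} [MeasurableSpace Ω] (μ : Measure Ω) (K : ℝ → ℝ) (h q : ℕ → ℝ)
    (X Y : ℕ → Ω → ℝ) (x rx fx : ℝ) (n0 n : ℕ) (ω : Ω) : ℝ :=
  fx⁻¹ * (∑ k ∈ Finset.Icc 1 n, q k)⁻¹ *
    ∑ k ∈ Finset.Icc (n0 - 1) n,
      q k * (h k)⁻¹ * (etaSeq K h X Y x rx k ω - ∫ ω', etaSeq K h X Y x rx k ω' ∂μ)

/-- Assumption (L1)/(M1) on the kernel `K`. -/
def AssumpK (K : ℝ → ℝ) : Prop :=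
  (∀ z, 0 ≤ K z) ∧ Continuous K ∧ (∃ C, ∀ z, K z ≤ C) ∧
    (∫ z : ℝ, K z) = 1 ∧ (∫ z : ℝ, z * K z) = 0 ∧ Integrable fun z : ℝ => z ^ 2 * K z

/-- Assumption (L3)/(M3) on the joint density `g`. -/
def AssumpG (g : ℝ → ℝ → ℝ) (x : ℝ) : Prop :=
  (∀ t, ContDiff ℝ 2 fun s => g s t) ∧
    (∀ j : ℕ, j ≤ 2 →
      (∃ C, ∀ s, |∫ t : ℝ, t ^ j * g s t| ≤ C) ∧
        ContinuousAt (fun s => ∫ t : ℝ, t ^ j * g s t) x) ∧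
    (∀ j : ℝ, j ∈ Icc (2:ℝ) 3 → ∃ C, ∀ s, (∫ t : ℝ, |t| ^ j * g s t) ≤ C) ∧
    (∀ j : ℕ, j ≤ 1 →
      Integrable (fun t : ℝ => |t| ^ (j:ℕ) * |deriv (fun s => g s t) x|) ∧
        (∃ C, ∀ s, |∫ t : ℝ, t ^ j * iteratedDeriv 2 (fun s' => g s' t) s| ≤ C) ∧
        ContinuousAt (fun s => ∫ t : ℝ, t ^ j * iteratedDeriv 2 (fun s' => g s' t) s) x)

/-- Assumption (L4)/(M4): exponential moments, bounded and continuous at `x`. -/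
def AssumpExp (g : ℝ → ℝ → ℝ) (x : ℝ) : Prop :=
  ∀ u : ℝ, ContinuousAt (fun t => ∫ y : ℝ, Real.exp (u * y) * g t y) x ∧
    ∃ C, ∀ t, (∫ y : ℝ, Real.exp (u * y) * g t y) ≤ C

/-- Assumption on the stepsizes `(γ_n)` from (L2)/(M2). -/
def AssumpSteps (γ : ℕ → ℝ) (α : ℝ) : Prop :=
  GSseq (-α) γ ∧ α ∈ Ioc (3/4 : ℝ) 1 ∧ (∀ n : ℕ, 1 ≤ n → 0 < γ n) ∧
    Tendsto (fun n : ℕ =>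
      (n : ℝ) * γ n / Real.log (∑ k ∈ Finset.Icc 1 n, γ k)) atTop atTop

/-- `(X, Y)` has joint density `g` with respect to Lebesgue measure on `ℝ²`. -/
def JointDensity {Ω : Type*} [MeasurableSpace Ω] (μ : Measure Ω) (X Y : Ω → ℝ)
    (g : ℝ → ℝ → ℝ) : Prop :=
  Measurable X ∧ Measurable Y ∧
    Measure.map (fun ω => (X ω, Y ω)) μ =
      (volume : Measure (ℝ × ℝ)).withDensity fun p => ENNReal.ofReal (g p.1 p.2)

end

noncomputable section

/-- The derivative `ψ'_{a,q,x}` (explicit integral formula). -/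
def psiD (K : ℝ → ℝ) (g : ℝ → ℝ → ℝ) (a q x : ℝ) (u : ℝ) : ℝ :=
  (1 - q) * ∫ p in (Icc (0:ℝ) 1) ×ˢ (univ : Set (ℝ × ℝ)),
    p.1 ^ (-q) * K p.2.1 * ((p.2.2 - reg g x) / fdens g x) *
      Real.exp (u * p.1 ^ (a - q) * K p.2.1 * (p.2.2 - reg g x) / fdens g x) * g x p.2.2

/-- The second derivative `ψ''_{a,q,x}` (explicit integral formula). -/
def psiDD (K : ℝ → ℝ) (g : ℝ → ℝ → ℝ) (a q x : ℝ) (u : ℝ) : ℝ :=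
  (1 - q) * ∫ p in (Icc (0:ℝ) 1) ×ˢ (univ : Set (ℝ × ℝ)),
    p.1 ^ (a - 2*q) * (K p.2.1) ^ 2 * ((p.2.2 - reg g x) / fdens g x) ^ 2 *
      Real.exp (u * p.1 ^ (a - q) * K p.2.1 * (p.2.2 - reg g x) / fdens g x) * g x p.2.2

end
section GSaux

private lemma harmonic_Ioc_tendsto (N : ℕ) :
    Tendsto (fun n => ∑ k ∈ Finset.Ioc N n, (1:ℝ)/(k:ℝ)) atTop atTop := by
  have hiota : ∀ n : ℕ, ∑ i ∈ Finset.range n, (1 / ((i:ℝ) + 1) : ℝ)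
      = ∑ k ∈ Finset.Ioc 0 n, (1:ℝ)/(k:ℝ) := by
    intro n
    induction n with
    | zero => simp
    | succ n ih =>
      rw [Finset.sum_range_succ, ih, Finset.sum_Ioc_succ_top (Nat.zero_le _)]
      push_cast; ring
  have hfull : Tendsto (fun n : ℕ => ∑ k ∈ Finset.Ioc 0 n, (1:ℝ)/(k:ℝ)) atTop atTop :=
    Real.tendsto_sum_range_one_div_nat_succ_atTop.congr hiota
  have hsub : Tendsto (fun n : ℕ =>
      (∑ k ∈ Finset.Ioc 0 n, (1:ℝ)/(k:ℝ)) + (-(∑ k ∈ Finset.Ioc 0 N, (1:ℝ)/(k:ℝ))))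
      atTop atTop := tendsto_atTop_add_const_right _ _ hfull
  apply hsub.congr'
  filter_upwards [eventually_ge_atTop N] with n hn
  have := Finset.sum_Ioc_consecutive (fun k : ℕ => (1:ℝ)/(k:ℝ)) (Nat.zero_le N) hn
  linarith

private lemma prod_Ioc_tendsto_zero {a : ℝ} (ha : 0 < a) {N : ℕ} (haN : a ≤ (N:ℝ)) :
    Tendsto (fun n => ∏ k ∈ Finset.Ioc N n, (1 - a/(k:ℝ))) atTop (nhds 0) := by
  have hfac : ∀ n : ℕ, ∀ k ∈ Finset.Ioc N n, (0:ℝ) ≤ 1 - a/(k:ℝ) := by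
    intro n k hk
    have hk1 : N < k := (Finset.mem_Ioc.mp hk).1
    have hkR : (N:ℝ) < (k:ℝ) := by exact_mod_cast hk1
    have hk0 : (0:ℝ) < (k:ℝ) := lt_of_le_of_lt (by positivity) (lt_of_le_of_lt haN hkR)
    have : a/(k:ℝ) ≤ 1 := by
      rw [div_le_one hk0]; linarith
    linarith
  apply squeeze_zero (g := fun n => Real.exp (-(a * ∑ k ∈ Finset.Ioc N n, (1:ℝ)/(k:ℝ))))
  · intro n; exact Finset.prod_nonneg (hfac n)
  · intro n
    calc ∏ k ∈ Finset.Ioc N n, (1 - a/(k:ℝ))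
        ≤ ∏ k ∈ Finset.Ioc N n, Real.exp (-(a * ((1:ℝ)/(k:ℝ)))) := by
          apply Finset.prod_le_prod (hfac n)
          intro k hk
          have := Real.add_one_le_exp (-(a * ((1:ℝ)/(k:ℝ))))
          have h2 : (1:ℝ) - a/(k:ℝ) = -(a * ((1:ℝ)/(k:ℝ))) + 1 := by ring
          linarith
      _ = Real.exp (∑ k ∈ Finset.Ioc N n, -(a * ((1:ℝ)/(k:ℝ)))) :=
          (Real.exp_sum _ _).symm
      _ = Real.exp (-(a * ∑ k ∈ Finset.Ioc N n, (1:ℝ)/(k:ℝ))) := by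
          congr 1
          rw [Finset.mul_sum, ← Finset.sum_neg_distrib]
  · have h1 : Tendsto (fun n : ℕ => a * ∑ k ∈ Finset.Ioc N n, (1:ℝ)/(k:ℝ)) atTop atTop :=
      (harmonic_Ioc_tendsto N).const_mul_atTop ha
    have h2 : Tendsto (fun n : ℕ => -(a * ∑ k ∈ Finset.Ioc N n, (1:ℝ)/(k:ℝ))) atTop atBot :=
      tendsto_neg_atBot_iff.mpr h1
    exact Real.tendsto_exp_atBot.comp h2

private lemma GS_key_aux (u c : ℕ → ℝ) (L : ℝ) (hL : 0 < L)
    (hc : Tendsto c atTop (nhds L)) (N0 : ℕ)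
    (hrec : ∀ m, N0 ≤ m → u (m+1) = (1 - c (m+1)/((m:ℝ)+1)) * u m + 1/((m:ℝ)+1)) :
    Tendsto u atTop (nhds (1/L)) := by
  rw [Metric.tendsto_atTop]
  intro δ hδ
  set ε := min (L/2) (δ*L^2/4) with hεdef
  have hε : (0:ℝ) < ε := lt_min (by positivity) (by positivity)
  have hεL : ε ≤ L/2 := min_le_left _ _
  have hεδ : ε ≤ δ*L^2/4 := min_le_right _ _
  set a := L - ε with hadef
  have ha2 : L/2 ≤ a := by simp only [hadef]; linarith
  have ha : 0 < a := by linarith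
  set E := ε/(L*a) with hEdef
  have hE : 0 < E := div_pos hε (mul_pos hL ha)
  have hE2 : E ≤ δ/2 := by
    rw [hEdef, div_le_iff₀ (mul_pos hL ha)]
    nlinarith
  obtain ⟨N1, hN1⟩ := Metric.tendsto_atTop.mp hc ε hε
  set N := max (max N0 N1) ⌈L + ε⌉₊ with hNdef
  have hNN0 : N0 ≤ N := le_trans (le_max_left _ _) (le_max_left _ _)
  have hNceil : L + ε ≤ (N:ℝ) :=
    le_trans (Nat.le_ceil _) (Nat.cast_le.mpr (le_max_right _ _))
  have haN : a ≤ (N:ℝ) := by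
    have : a ≤ L + ε := by simp only [hadef]; linarith
    linarith
  have hcb : ∀ n, N ≤ n → |c (n+1) - L| ≤ ε := by
    intro n hn
    have hN1n : N1 ≤ n + 1 := by
      have : N1 ≤ N := le_trans (le_max_right _ _) (le_max_left _ _)
      omega
    have := hN1 (n+1) hN1n
    rw [Real.dist_eq] at this
    exact this.le
  set W := |u N - 1/L| with hWdef
  have hW : 0 ≤ W := abs_nonneg _
  have inv : ∀ n, N ≤ n →
      |u n - 1/L| ≤ (∏ k ∈ Finset.Ioc N n, (1 - a/(k:ℝ))) * W + E := by
    intro n hn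
    induction n, hn using Nat.le_induction with
    | base =>
      simp only [Finset.Ioc_self, Finset.prod_empty, one_mul]
      linarith
    | succ n hn ih =>
      have hLne : L ≠ 0 := ne_of_gt hL
      have hn1 : (0:ℝ) < (n:ℝ) + 1 := by positivity
      have hcn := hcb n hn
      obtain ⟨hclo', hchi'⟩ := abs_le.mp hcn
      have hclo : a ≤ c (n+1) := by simp only [hadef]; linarith
      have hchi : c (n+1) ≤ L + ε := by linarith
      have hNn : (N:ℝ) ≤ (n:ℝ) := Nat.cast_le.mpr hn
      set t := a/((n:ℝ)+1) with htdef
      have hq1 : t ≤ c (n+1)/((n:ℝ)+1) := by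
        rw [htdef]; gcongr
      have hq2 : c (n+1)/((n:ℝ)+1) ≤ 1 := by
        rw [div_le_one hn1]; linarith
      have hqa : (0:ℝ) ≤ 1 - t := by
        rw [htdef, sub_nonneg, div_le_one hn1]; linarith
      have hw : u (n+1) - 1/L = (1 - c (n+1)/((n:ℝ)+1)) * (u n - 1/L)
          + (L - c (n+1))/(((n:ℝ)+1)*L) := by
        rw [hrec n (le_trans hNN0 hn)]
        field_simp
        ring
      have hpertbound : |(L - c (n+1))/(((n:ℝ)+1)*L)| ≤ t * E := by
        rw [abs_div, abs_of_pos (mul_pos hn1 hL)]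
        have h1 : |L - c (n+1)| ≤ ε := by rw [abs_sub_comm]; exact hcn
        have h2 : t * E = ε / (((n:ℝ)+1)*L) := by
          rw [htdef, hEdef]; field_simp
        rw [h2]
        gcongr
      have hcoef : |1 - c (n+1)/((n:ℝ)+1)| ≤ 1 - t := by
        rw [abs_of_nonneg (by linarith)]
        linarith
      have habs : |u (n+1) - 1/L| ≤ (1 - t) * |u n - 1/L| + t * E := by
        rw [hw]
        calc |(1 - c (n+1)/((n:ℝ)+1)) * (u n - 1/L) + (L - c (n+1))/(((n:ℝ)+1)*L)|
            ≤ |(1 - c (n+1)/((n:ℝ)+1)) * (u n - 1/L)| + |(L - c (n+1))/(((n:ℝ)+1)*L)| :=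
              abs_add_le _ _
          _ ≤ (1 - t) * |u n - 1/L| + t * E := by
              rw [abs_mul]
              gcongr
      have hPnn : (0:ℝ) ≤ ∏ k ∈ Finset.Ioc N n, (1 - a/(k:ℝ)) := by
        apply Finset.prod_nonneg
        intro k hk
        have hk1 : N < k := (Finset.mem_Ioc.mp hk).1
        have hkR : (N:ℝ) < (k:ℝ) := by exact_mod_cast hk1
        have hk0 : (0:ℝ) < (k:ℝ) := lt_of_le_of_lt (by positivity) (lt_of_le_of_lt haN hkR)
        have : a/(k:ℝ) ≤ 1 := by rw [div_le_one hk0]; linarith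
        linarith
      have hprod : ∏ k ∈ Finset.Ioc N (n+1), (1 - a/(k:ℝ))
          = (∏ k ∈ Finset.Ioc N n, (1 - a/(k:ℝ))) * (1 - t) := by
        rw [Finset.prod_Ioc_succ_top hn]
        push_cast
        rw [htdef]
      have hmul : (1 - t) * |u n - 1/L|
          ≤ (1 - t) * ((∏ k ∈ Finset.Ioc N n, (1 - a/(k:ℝ))) * W + E) :=
        mul_le_mul_of_nonneg_left ih hqa
      have hring : (1 - t) * ((∏ k ∈ Finset.Ioc N n, (1 - a/(k:ℝ))) * W + E) + t * E
          = (∏ k ∈ Finset.Ioc N n, (1 - a/(k:ℝ))) * (1 - t) * W + E := by ring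
      rw [hprod]
      linarith [habs, hmul, hring]
  have hP0 : Tendsto (fun n => (∏ k ∈ Finset.Ioc N n, (1 - a/(k:ℝ))) * W)
      atTop (nhds 0) := by
    have := (prod_Ioc_tendsto_zero ha haN).mul_const W
    simpa using this
  have hev : ∀ᶠ n in atTop, (∏ k ∈ Finset.Ioc N n, (1 - a/(k:ℝ))) * W < δ/2 :=
    hP0.eventually_lt_const (by linarith)
  obtain ⟨M, hM⟩ := eventually_atTop.mp (hev.and (eventually_ge_atTop N))
  refine ⟨M, fun n hn => ?_⟩
  obtain ⟨h1, h2⟩ := hM n hn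
  rw [Real.dist_eq]
  have := inv n h2
  linarith

end GSaux

theorem GS_sum_ratio_limit (b : ℕ → ℝ) (bs : ℝ) (hb : ∀ n, 1 ≤ n → 0 < b n)
    (hGS : GSseq (-bs) b) (hbs : bs < 1) (k0 : ℕ) (hk0 : 1 ≤ k0) :
    Tendsto (fun n : ℕ => (n:ℝ) * b n / ∑ k ∈ Finset.Icc k0 n, b k)
      atTop (nhds (1 - bs)) := by
  have hL : (0:ℝ) < 1 - bs := by linarith
  set S : ℕ → ℝ := fun n => ∑ k ∈ Finset.Icc k0 n, b k with hSdef
  set u : ℕ → ℝ := fun n => S n / ((n:ℝ) * b n) with hudef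
  set ρ : ℕ → ℝ := fun n => b (n-1) / b n with hρdef
  set c : ℕ → ℝ := fun n => (n:ℝ) * (1 - ρ n) + ρ n with hcdef
  have hg : Tendsto (fun n : ℕ => (n:ℝ) * (1 - ρ n)) atTop (nhds (-bs)) := hGS
  have hρlim : Tendsto ρ atTop (nhds 1) := by
    have h2 : Tendsto (fun n : ℕ => 1 - ((n:ℝ))⁻¹ * ((n:ℝ) * (1 - ρ n))) atTop
        (nhds (1 - 0 * (-bs))) :=
      tendsto_const_nhds.sub (tendsto_inv_atTop_nhds_zero_nat.mul hg)
    rw [show (1:ℝ) - 0 * (-bs) = 1 by ring] at h2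
    apply h2.congr'
    filter_upwards [eventually_ge_atTop 1] with n hn
    have hn0 : (n:ℝ) ≠ 0 := by
      have : (0:ℕ) < n := hn
      positivity
    field_simp
    ring
  have hclim : Tendsto c atTop (nhds (1 - bs)) := by
    have := hg.add hρlim
    rw [show -bs + 1 = 1 - bs by ring] at this
    exact this
  have hrec : ∀ m, k0 ≤ m → u (m+1) = (1 - c (m+1)/((m:ℝ)+1)) * u m + 1/((m:ℝ)+1) := by
    intro m hm
    have hm1 : 1 ≤ m := le_trans hk0 hm
    have hbm : b m ≠ 0 := ne_of_gt (hb m hm1)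
    have hbm1 : b (m+1) ≠ 0 := ne_of_gt (hb (m+1) (by omega))
    have hmR : (m:ℝ) ≠ 0 := by
      have : (0:ℕ) < m := hm1
      positivity
    have hSsucc : S (m+1) = S m + b (m+1) := by
      simp only [hSdef]
      exact Finset.sum_Icc_succ_top (by omega) _
    have hρm : ρ (m+1) = b m / b (m+1) := by simp [hρdef]
    simp only [hudef, hcdef, hρm, hSsucc]
    push_cast
    field_simp
    ring
  have hU : Tendsto u atTop (nhds (1/(1-bs))) := GS_key_aux u c (1-bs) hL hclim k0 hrec
  have hUi : Tendsto (fun n => (u n)⁻¹) atTop (nhds ((1/(1-bs))⁻¹)) :=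
    hU.inv₀ (by positivity)
  rw [show (1/(1-bs))⁻¹ = 1 - bs by field_simp] at hUi
  have heq : (fun n : ℕ => (n:ℝ) * b n / ∑ k ∈ Finset.Icc k0 n, b k)
      = fun n => (u n)⁻¹ := by
    funext n
    simp only [hudef, hSdef, inv_div]
  rw [heq]
  exact hUi
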